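/- Every monomial in the expansion of P = ∏_{i=1}^{n-k}∏_{j=1}^{k+1}(a_i - α_j) · ∏_{i=1}^{m-n+k+1}∏_{j=1}^{n-k}(b_i - β_j) (as a polynomial in the variables a_i, α_j, b_i, β_j) is divisible by at least one of: α_1⋯α_{k+1}·b_1⋯b_{m-n+k+1}, α_1⋯α_{k+1}·β_1⋯β_{n-k}, a_1⋯a_{n-k}·β_1⋯β_{n-k}, or a_1⋯a_{n-k}·b_1⋯b_{m-n+k+1}. -/

import Mathlib

open MvPolynomial Finset

/-- Each monomial of `∏_{j∈t} (X a - X (v j))` either contains `a` or all `v j`. -/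
lemma row_support {σ ι : Type*} [DecidableEq σ] (a : σ) (v : ι → σ) (t : Finset ι) :
    ∀ d ∈ ((∏ j ∈ t, (X a - X (v j)) : MvPolynomial σ ℤ)).support,
      1 ≤ d a ∨ ∀ j ∈ t, 1 ≤ d (v j) := by
  classical
  induction t using Finset.induction_on with
  | empty =>
      intro d hd
      simp only [Finset.prod_empty] at hd
      exact Or.inr (by simp)
  | insert _ _ hj ih =>
      rename_i j t
      intro d hd
      rw [Finset.prod_insert hj] at hd
      have hmul := MvPolynomial.support_mul _ _ hd
      rw [Finset.mem_add] at hmul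
      obtain ⟨d1, hd1, d2, hd2, rfl⟩ := hmul
      have hd1' : d1 ∈ ({Finsupp.single a 1, Finsupp.single (v j) 1} :
          Finset (σ →₀ ℕ)) := by
        have := MvPolynomial.support_sub σ (X a) (X (v j)) hd1
        simpa [MvPolynomial.support_X] using this
      rcases Finset.mem_insert.mp hd1' with h1 | h1
      · left
        have : d1 a = 1 := by rw [h1]; simp
        simp [Finsupp.add_apply, this]
      · rcases ih d2 hd2 with h2 | h2
        · left
          simp only [Finsupp.add_apply]
          omega
        · right
          intro j' hj'
          rcases Finset.mem_insert.mp hj' with rfl | hj'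
          · have : d1 (v j') = 1 := by
              rw [Finset.mem_singleton.mp h1]; simp
            simp [Finsupp.add_apply, this]
          · have := h2 j' hj'
            simp only [Finsupp.add_apply]
            omega

/-- Each monomial of the block product either contains all `u i` or all `v j`. -/
lemma block_support {σ ι κ : Type*} [DecidableEq σ] (u : ι → σ) (v : κ → σ)
    (s : Finset ι) (t : Finset κ) :
    ∀ d ∈ ((∏ i ∈ s, ∏ j ∈ t, (X (u i) - X (v j)) : MvPolynomial σ ℤ)).support,
      (∀ i ∈ s, 1 ≤ d (u i)) ∨ ∀ j ∈ t, 1 ≤ d (v j) := by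
  classical
  induction s using Finset.induction_on with
  | empty => intro d _; exact Or.inl (by simp)
  | insert _ _ hi ih =>
      rename_i i s
      intro d hd
      rw [Finset.prod_insert hi] at hd
      have hmul := MvPolynomial.support_mul _ _ hd
      rw [Finset.mem_add] at hmul
      obtain ⟨d1, hd1, d2, hd2, rfl⟩ := hmul
      rcases row_support (u i) v t d1 hd1 with h1 | h1
      · rcases ih d2 hd2 with h2 | h2
        · left
          intro i' hi'
          rcases Finset.mem_insert.mp hi' with rfl | hi'
          · simp only [Finsupp.add_apply]; omega
          · have := h2 i' hi'
            simp only [Finsupp.add_apply]; omega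
        · right
          intro j hj
          have := h2 j hj
          simp only [Finsupp.add_apply]; omega
      · right
        intro j hj
        have := h1 j hj
        simp only [Finsupp.add_apply]; omega

theorem monomials_of_P_divisibility
    (m n k : ℕ) (hmn : n ≤ m) (hn : 1 ≤ n) (hk : k ≤ n - 1) :
    ∀ d ∈ (((∏ i : Fin (n - k), ∏ j : Fin (k + 1),
          (X (Sum.inl (Sum.inl i)) - X (Sum.inl (Sum.inr j)))) *
        (∏ i : Fin (m - n + k + 1), ∏ j : Fin (n - k),
          (X (Sum.inr (Sum.inl i)) - X (Sum.inr (Sum.inr j))))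
        : MvPolynomial ((Fin (n - k) ⊕ Fin (k + 1)) ⊕ (Fin (m - n + k + 1) ⊕ Fin (n - k))) ℤ)).support,
      ((∀ j : Fin (k + 1), 1 ≤ d (Sum.inl (Sum.inr j))) ∧
          (∀ i : Fin (m - n + k + 1), 1 ≤ d (Sum.inr (Sum.inl i)))) ∨
      ((∀ j : Fin (k + 1), 1 ≤ d (Sum.inl (Sum.inr j))) ∧
          (∀ j : Fin (n - k), 1 ≤ d (Sum.inr (Sum.inr j)))) ∨
      ((∀ i : Fin (n - k), 1 ≤ d (Sum.inl (Sum.inl i))) ∧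
          (∀ j : Fin (n - k), 1 ≤ d (Sum.inr (Sum.inr j)))) ∨
      ((∀ i : Fin (n - k), 1 ≤ d (Sum.inl (Sum.inl i))) ∧
          (∀ i : Fin (m - n + k + 1), 1 ≤ d (Sum.inr (Sum.inl i)))) := by
  classical
  intro d hd
  have hmul := MvPolynomial.support_mul _ _ hd
  rw [Finset.mem_add] at hmul
  obtain ⟨d1, hd1, d2, hd2, rfl⟩ := hmul
  have h1 := block_support (fun i : Fin (n - k) => Sum.inl (Sum.inl i))
    (fun j : Fin (k + 1) => Sum.inl (Sum.inr j)) Finset.univ Finset.univ d1 hd1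
  have h2 := block_support (fun i : Fin (m - n + k + 1) => Sum.inr (Sum.inl i))
    (fun j : Fin (n - k) => Sum.inr (Sum.inr j)) Finset.univ Finset.univ d2 hd2
  simp only [Finset.mem_univ, forall_true_left, forall_const] at h1 h2
  have key : ∀ x, 1 ≤ d1 x ∨ 1 ≤ d2 x → 1 ≤ (d1 + d2) x := by
    intro x hx; simp only [Finsupp.add_apply]; omega
  rcases h1 with h1 | h1 <;> rcases h2 with h2 | h2
  · exact Or.inr (Or.inr (Or.inr ⟨fun i => key _ (Or.inl (h1 i)), fun i => key _ (Or.inr (h2 i))⟩))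
  · exact Or.inr (Or.inr (Or.inl ⟨fun i => key _ (Or.inl (h1 i)), fun j => key _ (Or.inr (h2 j))⟩))
  · exact Or.inl ⟨fun j => key _ (Or.inl (h1 j)), fun i => key _ (Or.inr (h2 i))⟩
  · exact Or.inr (Or.inl ⟨fun j => key _ (Or.inl (h1 j)), fun j => key _ (Or.inr (h2 j))⟩)
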